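/- Let Ω ⊂ ℝⁿ be a bounded measurable set, n ≥ 2, and let p₁, …, pₙ ∈ (1, ∞) with 1/p = (1/n)∑_{i=1}^n 1/pᵢ, ∑_{i=1}^n 1/pᵢ > 1, p* = np/(n−p), p' = p/(p−1), n' = n/(n−1). Let u : Ω → ℝ be measurable with a.e.-defined measurable partial derivatives ∂u/∂xᵢ (so that ∂(T_k u)/∂xᵢ = (∂u/∂xᵢ)·1_{{|u|<k}}), and let F > 0 be a constant (in the application F = ‖f‖_{L¹} for the datum f of the anisotropic equation). Assume: (a) for every k > 0, ∑_{i=1}^n ∫_{{|u|<k}} |∂u/∂xᵢ|^{pᵢ} dx ≤ k·F, and (b) the anisotropic Poincaré–Sobolev inequality for the truncations: ( ∫_Ω |T_k(u)|^{p*} dx )^{p/p*} ≤ C_S · ∑_{i=1}^n ∫_{{|u|<k}} |∂u/∂xᵢ|^{pᵢ} dx for all k > 0. Then there is a constant c > 0 depending only on n, p₁,…,pₙ and C_S such that: (1) meas{ |u| > k } ≤ c·F^{p*/p}·k^{−p*/p'} for all k > 0; and (2) for each i = 1, …, n, sup_{λ>0} λ · ( meas{ |∂u/∂xᵢ| > λ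 } )^{p'/(n' pᵢ)} ≤ c·F^{p'/pᵢ}, i.e. ∂u/∂xᵢ belongs to the Marcinkiewicz space L^{n'pᵢ/p', ∞}(Ω) with ‖∂u/∂xᵢ‖_{L^{n'pᵢ/p', ∞}} ≤ c·F^{p'/pᵢ}. -/

import Mathlib

open MeasureTheory Set
open scoped ENNReal

/-- Truncation at level `k`: `Tk k σ = max (−k) (min k σ)`. -/
def Tk (k σ : ℝ) : ℝ := max (-k) (min k σ)

/-- The harmonic-mean exponent `p` defined by `1/p = (1/n) ∑ᵢ 1/pᵢ`. -/
noncomputable def pbar (n : ℕ) (p : Fin n → ℝ) : ℝ := n / ∑ i, 1 / p i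

/-- The anisotropic Sobolev exponent `p* = np/(n−p)`. -/
noncomputable def pstar (n : ℕ) (p : Fin n → ℝ) : ℝ :=
  n * pbar n p / (n - pbar n p)

lemma abs_Tk {k σ : ℝ} (hk : 0 < k) (h : k ≤ |σ|) : |Tk k σ| = k := by
  rw [Tk]
  rcases le_or_gt k σ with h1 | h1
  · rw [min_eq_left h1, max_eq_right (by linarith : -k ≤ k), abs_of_pos hk]
  · have hσ : σ ≤ -k := by
      rcases abs_cases σ with ⟨h2, h3⟩ | ⟨h2, h3⟩ <;> linarith
    rw [min_eq_right h1.le, max_eq_left hσ, abs_neg, abs_of_pos hk]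

lemma ennreal_cancel {k : ℝ} (hk : 0 < k) (e : ℝ) {V R : ℝ≥0∞}
    (h : ENNReal.ofReal (k ^ e) * V ≤ R) : V ≤ ENNReal.ofReal (k ^ (-e)) * R := by
  calc V = ENNReal.ofReal (k ^ (-e)) * (ENNReal.ofReal (k ^ e) * V) := by
        rw [← mul_assoc, ← ENNReal.ofReal_mul (by positivity), ← Real.rpow_add hk,
          neg_add_cancel, Real.rpow_zero, ENNReal.ofReal_one, one_mul]
    _ ≤ _ := mul_le_mul_right h _

set_option maxHeartbeats 1000000 in
theorem stmt18 (n : ℕ) (hn : 2 ≤ n) (p : Fin n → ℝ) (hp : ∀ i, 1 < p i)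
    (hsum : 1 < ∑ i, 1 / p i) (CS : ℝ) (hCS : 0 < CS) :
    ∃ c : ℝ, 0 < c ∧
      ∀ Ω : Set (EuclideanSpace ℝ (Fin n)),
        MeasurableSet Ω → Bornology.IsBounded Ω →
      ∀ (u : EuclideanSpace ℝ (Fin n) → ℝ)
        (Du : EuclideanSpace ℝ (Fin n) → Fin n → ℝ) (F : ℝ),
        0 < F → Measurable u → Measurable Du →
        (∀ k : ℝ, 0 < k →
          ∑ i, ∫⁻ x in Ω ∩ {x | |u x| < k}, ENNReal.ofReal (|Du x i| ^ p i) ≤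
            ENNReal.ofReal (k * F)) →
        (∀ k : ℝ, 0 < k →
          (∫⁻ x in Ω, ENNReal.ofReal (|Tk k (u x)| ^ pstar n p)) ^
              (pbar n p / pstar n p) ≤
            ENNReal.ofReal CS *
              ∑ i, ∫⁻ x in Ω ∩ {x | |u x| < k}, ENNReal.ofReal (|Du x i| ^ p i)) →
        (∀ k : ℝ, 0 < k →
          volume (Ω ∩ {x | k < |u x|}) ≤
            ENNReal.ofReal (c * F ^ (pstar n p / pbar n p) *
              k ^ (-(pstar n p / (pbar n p / (pbar n p - 1)))))) ∧
        (∀ i : Fin n, ∀ lam : ℝ, 0 < lam →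
          ENNReal.ofReal lam *
              volume (Ω ∩ {x | lam < |Du x i|}) ^
                ((pbar n p / (pbar n p - 1)) / (((n : ℝ) / ((n : ℝ) - 1)) * p i)) ≤
            ENNReal.ofReal (c * F ^ ((pbar n p / (pbar n p - 1)) / p i))) := by
  classical
  set N : ℝ := (n : ℝ) with hNdef
  have hN2 : (2:ℝ) ≤ N := by rw [hNdef]; exact_mod_cast hn
  set s : ℝ := ∑ i, 1 / p i with hsdef
  have hs1 : 1 < s := hsum
  have hsN : s < N := by
    have h1 : ∀ i ∈ Finset.univ, 1 / p i < 1 := by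
      intro i _
      rw [div_lt_one (by linarith [hp i])]
      exact hp i
    have hne : (Finset.univ : Finset (Fin n)).Nonempty := by
      rw [Finset.univ_nonempty_iff]
      exact Fin.pos_iff_nonempty.mp (by omega)
    calc s < ∑ _i : Fin n, (1:ℝ) := Finset.sum_lt_sum_of_nonempty hne h1
      _ = N := by simp [hNdef]
  have hs0 : 0 < s := by linarith
  have hs1' : 0 < s - 1 := by linarith
  have hNs : 0 < N - s := by linarith
  have hN1 : 0 < N - 1 := by linarith
  have hsne : s ≠ 0 := hs0.ne'
  have hs1ne : s - 1 ≠ 0 := hs1'.ne'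
  have hNsne : N - s ≠ 0 := hNs.ne'
  have hN1ne : N - 1 ≠ 0 := hN1.ne'
  have hNne : N ≠ 0 := by positivity
  have hpb : pbar n p = N / s := rfl
  have hps : pstar n p = N / (s - 1) := by
    rw [pstar, hpb, ← hNdef]
    rw [show N - N / s = N * (s - 1) / s by field_simp <;> ring]
    field_simp
  have hp' : pbar n p / (pbar n p - 1) = N / (N - s) := by
    rw [hpb]
    rw [show N / s - 1 = (N - s) / s by field_simp]
    field_simp
  have hexp2 : pstar n p / pbar n p = s / (s - 1) := by
    rw [hps, hpb]
    field_simp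
  have hexp3 : pstar n p / (pbar n p / (pbar n p - 1)) = (N - s) / (s - 1) := by
    rw [hps, hp']
    field_simp
  have hr : pbar n p / pstar n p = (s - 1) / s := by
    rw [hps, hpb]
    field_simp
  -- constants
  set σ : ℝ := s / (s - 1) with hσdef
  set τ : ℝ := (N - s) / (s - 1) with hτdef
  set c₁ : ℝ := CS ^ σ with hc₁def
  set c₂ : ℝ := c₁ * 2 ^ τ with hc₂def
  set b : ℝ := c₂ + 1 with hbdef
  have hc₁ : 0 < c₁ := by positivity
  have hc₂ : 0 < c₂ := by positivity
  have hb1 : 1 < b := by simp only [hbdef]; linarith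
  set E : ℝ := ∑ j, (N - 1) / (p j * (N - s)) with hEdef
  set c : ℝ := c₁ + b ^ E with hcdef
  have hc : 0 < c := by positivity
  refine ⟨c, hc, ?_⟩
  intro Ω hΩm hΩb u Du F hF hu hDu ha hb'
  -- the key intermediate estimate (level-set bound with explicit constant c₁)
  have key : ∀ k : ℝ, 0 < k →
      volume (Ω ∩ {x | k < |u x|}) ≤ ENNReal.ofReal (c₁ * F ^ σ * k ^ (-τ)) := by
    intro k hk
    set A := Ω ∩ {x | k < |u x|} with hAdef
    have hAm : MeasurableSet A := hΩm.inter (measurableSet_lt measurable_const hu.abs)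
    have h1 : ENNReal.ofReal (k ^ pstar n p) * volume A ≤
        ∫⁻ x in Ω, ENNReal.ofReal (|Tk k (u x)| ^ pstar n p) := by
      calc ENNReal.ofReal (k ^ pstar n p) * volume A
          = ∫⁻ _ in A, ENNReal.ofReal (k ^ pstar n p) := (setLIntegral_const _ _).symm
        _ ≤ ∫⁻ x in A, ENNReal.ofReal (|Tk k (u x)| ^ pstar n p) := by
            refine setLIntegral_mono' hAm fun x hx => ?_
            rw [abs_Tk hk hx.2.le]
        _ ≤ _ := lintegral_mono_set inter_subset_left
    have h2 : (∫⁻ x in Ω, ENNReal.ofReal (|Tk k (u x)| ^ pstar n p)) ^ ((s - 1) / s) ≤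
        ENNReal.ofReal (CS * (k * F)) := by
      rw [← hr]
      refine (hb' k hk).trans ?_
      rw [ENNReal.ofReal_mul hCS.le]
      exact mul_le_mul_right (ha k hk) _
    have h3 : (ENNReal.ofReal (k ^ pstar n p) * volume A) ^ ((s - 1) / s) ≤
        ENNReal.ofReal (CS * (k * F)) :=
      (ENNReal.rpow_le_rpow h1 (by positivity)).trans h2
    rw [ENNReal.mul_rpow_of_nonneg _ _ (by positivity),
      ENNReal.ofReal_rpow_of_pos (by positivity)] at h3
    rw [show (k ^ pstar n p) ^ ((s - 1) / s) = k ^ (N / s) by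
      rw [← Real.rpow_mul hk.le, hps]; congr 1; field_simp <;> ring] at h3
    have h4 := ennreal_cancel hk (N / s) h3
    rw [← ENNReal.ofReal_mul (by positivity)] at h4
    have h5 : volume A ≤ (ENNReal.ofReal (k ^ (-(N / s)) * (CS * (k * F)))) ^ σ := by
      have h40 : volume A = (volume A ^ ((s - 1) / s)) ^ σ := by
        rw [← ENNReal.rpow_mul, show (s - 1) / s * σ = 1 by
          rw [hσdef]; field_simp, ENNReal.rpow_one]
      rw [h40]
      exact ENNReal.rpow_le_rpow h4 (by positivity)
    rw [ENNReal.ofReal_rpow_of_pos (by positivity)] at h5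
    refine h5.trans (ENNReal.ofReal_le_ofReal (le_of_eq ?_))
    rw [show k ^ (-(N / s)) * (CS * (k * F)) = CS * F * k ^ ((s - N) / s) by
      rw [show (s - N) / s = -(N / s) + 1 by field_simp <;> ring, Real.rpow_add hk,
        Real.rpow_one]; ring]
    rw [Real.mul_rpow (by positivity) (by positivity), Real.mul_rpow hCS.le hF.le,
      ← Real.rpow_mul hk.le]
    rw [show (s - N) / s * σ = -τ by rw [hσdef, hτdef]; field_simp <;> ring]
  constructor
  · -- part (1)
    intro k hk
    refine (key k hk).trans (ENNReal.ofReal_le_ofReal ?_)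
    rw [hexp2, hexp3]
    have hc₁c : c₁ ≤ c := by
      have hbE : 0 < b ^ E := Real.rpow_pos_of_pos (by linarith) E
      rw [hcdef]; linarith
    exact mul_le_mul_of_nonneg_right
      (mul_le_mul_of_nonneg_right hc₁c (by positivity)) (by positivity)
  · -- part (2)
    intro i lam hlam
    have hpi : 1 < p i := hp i
    have hpi0 : 0 < p i := by linarith
    set ρ : ℝ := p i * (N - s) / (N - 1) with hρdef
    set e : ℝ := (N - 1) / (p i * (N - s)) with hedef
    set k : ℝ := F ^ (1 / (N - 1)) * lam ^ (p i * (s - 1) / (N - 1)) with hkdef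
    have hk : 0 < k := by positivity
    -- splitting of the level set
    have hsub : Ω ∩ {x | lam < |Du x i|} ⊆
        (Ω ∩ {x | k / 2 < |u x|}) ∪ (Ω ∩ {x | |u x| < k} ∩ {x | lam < |Du x i|}) := by
      intro x hx
      by_cases hxu : |u x| < k
      · exact Or.inr ⟨⟨hx.1, hxu⟩, hx.2⟩
      · exact Or.inl ⟨hx.1, by push_neg at hxu; simp only [mem_setOf_eq]; linarith⟩
    -- Chebyshev bound on the second piece
    set B := Ω ∩ {x | |u x| < k} ∩ {x | lam < |Du x i|} with hBdef
    have hd : volume (Ω ∩ {x | lam < |Du x i|}) ≤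
        volume (Ω ∩ {x | k / 2 < |u x|}) + volume B :=
      (measure_mono hsub).trans (measure_union_le _ _)
    have hBm : MeasurableSet B :=
      (hΩm.inter (measurableSet_lt hu.abs measurable_const)).inter
        (measurableSet_lt measurable_const ((measurable_pi_apply i).comp hDu).abs)
    have hcheb : ENNReal.ofReal (lam ^ p i) * volume B ≤ ENNReal.ofReal (k * F) := by
      calc ENNReal.ofReal (lam ^ p i) * volume B
          = ∫⁻ _ in B, ENNReal.ofReal (lam ^ p i) := (setLIntegral_const _ _).symm
        _ ≤ ∫⁻ x in B, ENNReal.ofReal (|Du x i| ^ p i) := by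
            refine setLIntegral_mono' hBm fun x hx => ?_
            exact ENNReal.ofReal_le_ofReal
              (Real.rpow_le_rpow hlam.le hx.2.le hpi0.le)
        _ ≤ ∫⁻ x in Ω ∩ {x | |u x| < k}, ENNReal.ofReal (|Du x i| ^ p i) :=
            lintegral_mono_set inter_subset_left
        _ ≤ ∑ j, ∫⁻ x in Ω ∩ {x | |u x| < k}, ENNReal.ofReal (|Du x j| ^ p j) :=
            Finset.single_le_sum
              (f := fun j => ∫⁻ x in Ω ∩ {x | |u x| < k},
                ENNReal.ofReal (|Du x j| ^ p j))
              (fun j _ => zero_le) (Finset.mem_univ i)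
        _ ≤ ENNReal.ofReal (k * F) := ha k hk
    have hB := ennreal_cancel hlam (p i) hcheb
    rw [← ENNReal.ofReal_mul (by positivity)] at hB
    -- combine
    have htot : volume (Ω ∩ {x | lam < |Du x i|}) ≤
        ENNReal.ofReal (b * (F ^ (N / (N - 1)) * lam ^ (-ρ))) := by
      refine hd.trans ?_
      refine (add_le_add (key (k / 2) (by positivity)) hB).trans ?_
      rw [← ENNReal.ofReal_add (by positivity) (by positivity)]
      refine ENNReal.ofReal_le_ofReal (le_of_eq ?_)
      have hhalf : (k / 2) ^ (-τ) = k ^ (-τ) * 2 ^ τ := by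
        rw [div_eq_mul_inv, Real.mul_rpow hk.le (by positivity),
          ← Real.rpow_neg_one (2:ℝ), ← Real.rpow_mul (by norm_num : (0:ℝ) ≤ 2),
          neg_one_mul, neg_neg]
      have e1 : c₁ * F ^ σ * (k / 2) ^ (-τ) = c₂ * (F ^ (N / (N - 1)) * lam ^ (-ρ)) := by
        rw [hhalf, hkdef, Real.mul_rpow (by positivity) (by positivity),
          ← Real.rpow_mul hF.le, ← Real.rpow_mul hlam.le]
        rw [show p i * (s - 1) / (N - 1) * (-τ) = -ρ by
          rw [hτdef, hρdef]; field_simp <;> ring]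
        rw [hc₂def, show c₁ * F ^ σ * (F ^ (1 / (N - 1) * -τ) * lam ^ (-ρ) * 2 ^ τ) =
          c₁ * 2 ^ τ * ((F ^ σ * F ^ (1 / (N - 1) * -τ)) * lam ^ (-ρ)) by ring,
          ← Real.rpow_add hF]
        rw [show σ + 1 / (N - 1) * -τ = N / (N - 1) by
          rw [hσdef, hτdef]; field_simp <;> ring]
      have e2 : lam ^ (-p i) * (k * F) = F ^ (N / (N - 1)) * lam ^ (-ρ) := by
        rw [hkdef]
        calc lam ^ (-p i) * (F ^ (1 / (N - 1)) * lam ^ (p i * (s - 1) / (N - 1)) * F)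
            = (F ^ (1 / (N - 1)) * F ^ (1:ℝ)) *
              (lam ^ (-p i) * lam ^ (p i * (s - 1) / (N - 1))) := by
              rw [Real.rpow_one]; ring
          _ = F ^ (1 / (N - 1) + 1) * lam ^ (-p i + p i * (s - 1) / (N - 1)) := by
              rw [← Real.rpow_add hF, ← Real.rpow_add hlam]
          _ = F ^ (N / (N - 1)) * lam ^ (-ρ) := by
              rw [show 1 / (N - 1) + 1 = N / (N - 1) by field_simp; ring,
                show -p i + p i * (s - 1) / (N - 1) = -ρ by rw [hρdef]; field_simp <;> ring]
      rw [e1, e2, hbdef]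
      ring
    -- raise to power e and conclude
    rw [show pbar n p / (pbar n p - 1) / (N / (N - 1) * p i) = e by
      rw [hp', hedef]; field_simp <;> ring]
    rw [show pbar n p / (pbar n p - 1) / p i = N / ((N - s) * p i) by
      rw [hp', div_div]]
    have h6 : volume (Ω ∩ {x | lam < |Du x i|}) ^ e ≤
        ENNReal.ofReal ((b * (F ^ (N / (N - 1)) * lam ^ (-ρ))) ^ e) := by
      rw [← ENNReal.ofReal_rpow_of_pos (by positivity)]
      exact ENNReal.rpow_le_rpow htot (by positivity)
    calc ENNReal.ofReal lam * volume (Ω ∩ {x | lam < |Du x i|}) ^ e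
        ≤ ENNReal.ofReal lam *
          ENNReal.ofReal ((b * (F ^ (N / (N - 1)) * lam ^ (-ρ))) ^ e) :=
          mul_le_mul_right h6 _
      _ = ENNReal.ofReal (lam * (b * (F ^ (N / (N - 1)) * lam ^ (-ρ))) ^ e) :=
          (ENNReal.ofReal_mul hlam.le).symm
      _ ≤ ENNReal.ofReal (c * F ^ (N / ((N - s) * p i))) := by
          refine ENNReal.ofReal_le_ofReal ?_
          rw [Real.mul_rpow (by positivity) (by positivity),
            Real.mul_rpow (by positivity) (by positivity),
            ← Real.rpow_mul hF.le, ← Real.rpow_mul hlam.le]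
          rw [show N / (N - 1) * e = N / ((N - s) * p i) by
            rw [hedef]; field_simp]
          rw [show -ρ * e = -1 by rw [hρdef, hedef]; field_simp <;> ring,
            Real.rpow_neg_one]
          rw [show lam * (b ^ e * (F ^ (N / ((N - s) * p i)) * lam⁻¹)) =
            b ^ e * F ^ (N / ((N - s) * p i)) by field_simp <;> ring]
          have hbe : b ^ e ≤ c := by
            have heE : e ≤ E := by
              rw [hedef, hEdef]
              exact Finset.single_le_sum
                (f := fun j => (N - 1) / (p j * (N - s)))
                (fun j _ => by have := hp j; positivity) (Finset.mem_univ i)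
            calc b ^ e ≤ b ^ E := Real.rpow_le_rpow_of_exponent_le hb1.le heE
              _ ≤ c := by rw [hcdef]; linarith
          exact mul_le_mul_of_nonneg_right hbe (by positivity)
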